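/- Let M ≥ 2 be an integer, r a positive real, μ_1,…,μ_M nonzero reals, and σ_1²,…,σ_M² positive reals. Define E² = r² ∏_{k=1}^M μ_k², v_{{p}} = r σ_p² ∏_{k≠p} μ_k² for each p, and v_{{p,q}} = r σ_p² σ_q² ∏_{k∉{p,q}} μ_k² for p ≠ q. Then for any two distinct modes p ≠ q, (v_{{p,q}} · E²) / (v_{{p}} · v_{{q}}) = r. -/

import Mathlib

/-- Closed-form rank estimator for the PARAFAC/CP model: with
`E² = r² ∏ μ k²`, `v_{p} = r σ p² ∏_{k≠p} μ k²` and
`v_{p,q} = r σ p² σ q² ∏_{k∉{p,q}} μ k²`, for any distinct modes `p ≠ q`,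
`(v_{p,q} · E²) / (v_{p} · v_{q}) = r`. -/
theorem cp_closed_form_rank
    (M : ℕ) (hM : 2 ≤ M) (r : ℝ) (hr : 0 < r)
    (μ : Fin M → ℝ) (hμ : ∀ k, μ k ≠ 0)
    (σ2 : Fin M → ℝ) (hσ : ∀ k, 0 < σ2 k)
    (p q : Fin M) (hpq : p ≠ q) :
    ((r * σ2 p * σ2 q * ∏ k ∈ ({p, q} : Finset (Fin M))ᶜ, μ k ^ 2) *
        (r ^ 2 * ∏ k : Fin M, μ k ^ 2)) /
      ((r * σ2 p * ∏ k ∈ ({p} : Finset (Fin M))ᶜ, μ k ^ 2) *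
        (r * σ2 q * ∏ k ∈ ({q} : Finset (Fin M))ᶜ, μ k ^ 2)) = r := by
  have hP : ∀ (s : Finset (Fin M)), (∏ k ∈ sᶜ, μ k ^ 2) * ∏ k ∈ s, μ k ^ 2
      = ∏ k : Fin M, μ k ^ 2 := fun s => Finset.prod_compl_mul_prod s _
  have h1 := hP {p}
  have h2 := hP {q}
  have h3 := hP {p, q}
  rw [Finset.prod_singleton] at h1 h2
  rw [Finset.prod_pair hpq] at h3
  have hμp := hμ p
  have hμq := hμ q
  have hσp := (hσ p).ne'
  have hσq := (hσ q).ne'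
  have hPne : (∏ k : Fin M, μ k ^ 2) ≠ 0 :=
    Finset.prod_ne_zero_iff.2 fun k _ => pow_ne_zero 2 (hμ k)
  have e1 : (∏ k ∈ ({p} : Finset (Fin M))ᶜ, μ k ^ 2)
      = (∏ k : Fin M, μ k ^ 2) / μ p ^ 2 := by
    field_simp [← h1]
    linear_combination h1
  have e2 : (∏ k ∈ ({q} : Finset (Fin M))ᶜ, μ k ^ 2)
      = (∏ k : Fin M, μ k ^ 2) / μ q ^ 2 := by
    field_simp [← h2]
    linear_combination h2
  have e3 : (∏ k ∈ ({p, q} : Finset (Fin M))ᶜ, μ k ^ 2)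
      = (∏ k : Fin M, μ k ^ 2) / (μ p ^ 2 * μ q ^ 2) := by
    field_simp [← h3]
    linear_combination h3
  rw [e1, e2, e3]
  field_simp
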